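/- Consider the single-pass dyMEAN network built from: (i) the L-layer alternating encoder on two disjoint finite vertex sets V_{ES} (containing the shadow paratope V_S) and V_A (containing the native paratope V_P), with a bijection σ : V_S → V_P along which hidden states are shared, with arbitrary layer functions φ_m, φ_x, φ_h and the concrete geometric relation extractor T_R and geometric message scaler T_S; (ii) the prediction p_i = Softmax(φ_p(h_final(i))) for each i ∈ V_P, for an arbitrary function φ_p : ℝ^{d'} → ℝ^{n_a}; and (iii) docking: given any global minimizer (Q₀, t₀) over O(3) × ℝ³ of Σ_{i∈V_S} ‖Q₀ X_final(σ(i)) + t₀ 1ᵀ − X_final(i)‖_F², the docked coordinates are X̃_j = Q₀ X_final(j) + t₀ 1ᵀ for j ∈ V_A. Then dyMEAN is E(3)-equivariant: for any Q₁, Q₂ ∈ O(3) and t₁, t₂ ∈ ℝ³, if the input coordinates on V_{ES} are replaced by Q₁ X(i) + t₁ 1ᵀ and those on V_A by Q₂ X(i) + t₂ 1ᵀ, then (a) all predicted distributions p_i, i ∈ V_P, are unchanged, and (b) the corresponding pair (Q₁ Q₀ Q₂ᵀ, Q₁ t₀ + t₁ − Q₁ Q₀ Q₂ᵀ t₂)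 is a global minimizer of the transformed alignment problem whose docked coordinates equal Q₁ X̃_j + t₁ 1ᵀ for every j ∈ V_A. -/
import Mathlib


open Matrix BigOperators

attribute [local instance] Classical.propDecidable

noncomputable section

/-- Euclidean distance between the `p`-th column of `X` and the `q`-th column of `Y`. -/
def colDist {ci cj : ℕ} (X : Matrix (Fin 3) (Fin ci) ℝ) (Y : Matrix (Fin 3) (Fin cj) ℝ)
    (p : Fin ci) (q : Fin cj) : ℝ :=
  Real.sqrt (∑ r : Fin 3, (X r p - Y r q) ^ 2)

/-- Rigid (Euclidean) action `g·X = QX + t1ᵀ`, acting columnwise by `x ↦ Qx + t`. -/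
def rigid {c : ℕ} (Q : Matrix (Fin 3) (Fin 3) ℝ) (t : Fin 3 → ℝ)
    (X : Matrix (Fin 3) (Fin c) ℝ) : Matrix (Fin 3) (Fin c) ℝ :=
  Matrix.of fun r p => (∑ s : Fin 3, Q r s * X s p) + t r

/-- Geometric relation extractor `T_R(X_i, X_j) = A_iᵀ ((w_i w_jᵀ) ⊙ D(X_i, X_j)) A_j`. -/
def TR {ci cj d : ℕ} (Ai : Matrix (Fin ci) (Fin d) ℝ) (Aj : Matrix (Fin cj) (Fin d) ℝ)
    (wi : Fin ci → ℝ) (wj : Fin cj → ℝ)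
    (X : Matrix (Fin 3) (Fin ci) ℝ) (Y : Matrix (Fin 3) (Fin cj) ℝ) :
    Matrix (Fin d) (Fin d) ℝ :=
  Aiᵀ * (Matrix.of fun p q => wi p * wj q * colDist X Y p q) * Aj

/-- Frobenius norm of a real matrix. -/
def frob {n m : ℕ} (M : Matrix (Fin n) (Fin m) ℝ) : ℝ :=
  Real.sqrt (∑ i : Fin n, ∑ j : Fin m, (M i j) ^ 2)

/-- Average pooling of `s ∈ ℝ^C` with window size `C − c + 1` and stride 1. -/
def avgPool {c C : ℕ} (hc : c ≤ C) (s : Fin C → ℝ) : Fin c → ℝ :=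
  fun k => (∑ m : Fin (C - c + 1), s ⟨k.val + m.val, by omega⟩) / ((C - c + 1 : ℕ) : ℝ)

/-- Geometric message scaler `T_S(X, s) = X · diag(s')`. -/
def TS {c C : ℕ} (hc : c ≤ C) (X : Matrix (Fin 3) (Fin c) ℝ) (s : Fin C → ℝ) :
    Matrix (Fin 3) (Fin c) ℝ :=
  Matrix.of fun r p => X r p * avgPool hc s p

/-- The per-vertex parameters and topology of one graph: attribute matrices `A_i`,
channel weights `w_i`, neighborhoods `N`, and the channel-size bound `c(i) ≤ C`. -/
structure GraphParams (V : Type*) (d m' C : ℕ) (c : V → ℕ) where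
  A : (i : V) → Matrix (Fin (c i)) (Fin d) ℝ
  w : (i : V) → Fin (c i) → ℝ
  N : V → Finset V
  hC : ∀ i, c i ≤ C

/-- The (arbitrary) functions `φ_m`, `φ_x`, `φ_h` of one message-passing layer. -/
structure LayerFuns (d dh m' C : ℕ) where
  φm : (Fin dh → ℝ) → (Fin dh → ℝ) → Matrix (Fin d) (Fin d) ℝ → (Fin m' → ℝ)
  φx : (Fin m' → ℝ) → (Fin C → ℝ)
  φh : (Fin dh → ℝ) → (Fin m' → ℝ) → (Fin dh → ℝ)

variable {V : Type*} {d dh m' C : ℕ}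

/-- Non-geometric message `m_{ij}`. -/
def msgOf {c : V → ℕ} (G : GraphParams V d m' C c) (F : LayerFuns d dh m' C)
    (h : V → Fin dh → ℝ) (X : (i : V) → Matrix (Fin 3) (Fin (c i)) ℝ)
    (i j : V) : Fin m' → ℝ :=
  F.φm (h i) (h j)
    ((frob (TR (G.A i) (G.A j) (G.w i) (G.w j) (X i) (X j)) + 1)⁻¹ •
      TR (G.A i) (G.A j) (G.w i) (G.w j) (X i) (X j))

/-- Geometric message `X_{ij} = T_S(X_i − μ_j 1ᵀ, φ_x(m_{ij}))`. -/
def xMsgOf {c : V → ℕ} (G : GraphParams V d m' C c) (F : LayerFuns d dh m' C)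
    (h : V → Fin dh → ℝ) (X : (i : V) → Matrix (Fin 3) (Fin (c i)) ℝ)
    (i j : V) : Matrix (Fin 3) (Fin (c i)) ℝ :=
  TS (G.hC i) (Matrix.of fun r p => X i r p - (∑ q : Fin (c j), X j r q) / ((c j : ℕ) : ℝ))
    (F.φx (msgOf G F h X i j))

/-- Hidden-state update `h'(i) = φ_h(h(i), Σ_{j ∈ N(i)} m_{ij})`. -/
def hOut {c : V → ℕ} (G : GraphParams V d m' C c) (F : LayerFuns d dh m' C)
    (h : V → Fin dh → ℝ) (X : (i : V) → Matrix (Fin 3) (Fin (c i)) ℝ)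
    (i : V) : Fin dh → ℝ :=
  F.φh (h i) (∑ j ∈ G.N i, msgOf G F h X i j)

/-- Coordinate update `X'(i) = X(i) + (1/|N(i)|) Σ_{j ∈ N(i)} X_{ij}`. -/
def xOut {c : V → ℕ} (G : GraphParams V d m' C c) (F : LayerFuns d dh m' C)
    (h : V → Fin dh → ℝ) (X : (i : V) → Matrix (Fin 3) (Fin (c i)) ℝ)
    (i : V) : Matrix (Fin 3) (Fin (c i)) ℝ :=
  X i + (((G.N i).card : ℝ))⁻¹ • ∑ j ∈ G.N i, xMsgOf G F h X i j

/-- The full state of the encoder: hidden states and coordinates of the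
epitope-with-shadow-paratope graph (`E`) and of the antibody graph (`A`). -/
structure EncState (VE VA : Type*) (dh : ℕ) (cE : VE → ℕ) (cA : VA → ℕ) where
  hE : VE → Fin dh → ℝ
  hA : VA → Fin dh → ℝ
  XE : (i : VE) → Matrix (Fin 3) (Fin (cE i)) ℝ
  XA : (j : VA) → Matrix (Fin 3) (Fin (cA j)) ℝ

variable {VE VA ιS : Type*}

/-- Copy the hidden states of the native paratope onto the shadow paratope:
`h(eS k) := hA(eP k)`. -/
def copyToShadow (eS : ιS → VE) (eP : ιS → VA)
    (hE : VE → Fin dh → ℝ) (hA : VA → Fin dh → ℝ) : VE → Fin dh → ℝ :=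
  fun i => if hk : ∃ k, eS k = i then hA (eP (Classical.choose hk)) else hE i

/-- Copy the hidden states of the shadow paratope back onto the native paratope:
`h(eP k) := hE(eS k)`. -/
def copyToNative (eS : ιS → VE) (eP : ιS → VA)
    (hE : VE → Fin dh → ℝ) (hA : VA → Fin dh → ℝ) : VA → Fin dh → ℝ :=
  fun j => if hk : ∃ k, eP k = j then hE (eS (Classical.choose hk)) else hA j

/-- One round of the alternating encoder: a message-passing layer on the antibody graph,
sharing of hidden states to the shadow paratope, a message-passing layer on the
epitope graph, and sharing of hidden states back to the native paratope. -/
def encStep {cE : VE → ℕ} {cA : VA → ℕ}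
    (GE : GraphParams VE d m' C cE) (GA : GraphParams VA d m' C cA)
    (eS : ιS → VE) (eP : ιS → VA)
    (FE FA : ℕ → LayerFuns d dh m' C) (l : ℕ)
    (st : EncState VE VA dh cE cA) : EncState VE VA dh cE cA :=
  let hA1 := fun j => hOut GA (FA l) st.hA st.XA j
  let XA1 := fun j => xOut GA (FA l) st.hA st.XA j
  let hE1 := copyToShadow eS eP st.hE hA1
  let hE2 := fun i => hOut GE (FE l) hE1 st.XE i
  let XE1 := fun i => xOut GE (FE l) hE1 st.XE i
  let hA2 := copyToNative eS eP hE2 hA1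
  ⟨hE2, hA2, XE1, XA1⟩

/-- The `L`-layer alternating encoder. -/
def encoder {cE : VE → ℕ} {cA : VA → ℕ}
    (GE : GraphParams VE d m' C cE) (GA : GraphParams VA d m' C cA)
    (eS : ιS → VE) (eP : ιS → VA)
    (FE FA : ℕ → LayerFuns d dh m' C) :
    ℕ → EncState VE VA dh cE cA → EncState VE VA dh cE cA
  | 0, st => st
  | l + 1, st => encoder GE GA eS eP FE FA l (encStep GE GA eS eP FE FA l st)


/-- Softmax on `ℝ^n`. -/
def softmax {n : ℕ} (v : Fin n → ℝ) : Fin n → ℝ :=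
  fun i => Real.exp (v i) / ∑ j : Fin n, Real.exp (v j)

/-- The alignment loss of the native paratope onto the shadow paratope:
`Σ_{k} ‖Q X_A(eP k) + t 1ᵀ − X_E(eS k)‖_F²` (channels identified along `cE (eS k) = cA (eP k)`). -/
def paratopeAlignLoss [Fintype ιS] {cE : VE → ℕ} {cA : VA → ℕ}
    (eS : ιS → VE) (eP : ιS → VA) (hmatch : ∀ k, cE (eS k) = cA (eP k))
    (XE : (i : VE) → Matrix (Fin 3) (Fin (cE i)) ℝ)
    (XA : (j : VA) → Matrix (Fin 3) (Fin (cA j)) ℝ)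
    (Q : Matrix (Fin 3) (Fin 3) ℝ) (t : Fin 3 → ℝ) : ℝ :=
  ∑ k : ιS, ∑ r : Fin 3, ∑ p : Fin (cA (eP k)),
    (rigid Q t (XA (eP k)) r p - XE (eS k) r (Fin.cast (hmatch k).symm p)) ^ 2

/-- `(Q, t)` is a global minimizer over `O(3) × ℝ³` of the paratope alignment loss. -/
def IsDockMin [Fintype ιS] {cE : VE → ℕ} {cA : VA → ℕ}
    (eS : ιS → VE) (eP : ιS → VA) (hmatch : ∀ k, cE (eS k) = cA (eP k))
    (XE : (i : VE) → Matrix (Fin 3) (Fin (cE i)) ℝ)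
    (XA : (j : VA) → Matrix (Fin 3) (Fin (cA j)) ℝ)
    (Q : Matrix (Fin 3) (Fin 3) ℝ) (t : Fin 3 → ℝ) : Prop :=
  Qᵀ * Q = 1 ∧ ∀ (Q' : Matrix (Fin 3) (Fin 3) ℝ) (t' : Fin 3 → ℝ), Q'ᵀ * Q' = 1 →
    paratopeAlignLoss eS eP hmatch XE XA Q t ≤ paratopeAlignLoss eS eP hmatch XE XA Q' t'

/-! ### Auxiliary lemmas -/

lemma orth_sum_sq {Q : Matrix (Fin 3) (Fin 3) ℝ} (hQ : Qᵀ * Q = 1) (v : Fin 3 → ℝ) :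
    ∑ r : Fin 3, (∑ s : Fin 3, Q r s * v s) ^ 2 = ∑ r : Fin 3, v r ^ 2 := by
  have h1 : ∀ r : Fin 3, (∑ s : Fin 3, Q r s * v s) ^ 2
      = ∑ s : Fin 3, ∑ u : Fin 3, Q r s * Q r u * (v s * v u) := by
    intro r
    rw [sq, Finset.sum_mul_sum]
    exact Finset.sum_congr rfl fun s _ => Finset.sum_congr rfl fun u _ => by ring
  simp_rw [h1]
  rw [Finset.sum_comm]
  have h2 : ∀ s : Fin 3, ∑ r : Fin 3, ∑ u : Fin 3, Q r s * Q r u * (v s * v u)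
      = ∑ u : Fin 3, (Qᵀ * Q) s u * (v s * v u) := by
    intro s
    rw [Finset.sum_comm]
    refine Finset.sum_congr rfl fun u _ => ?_
    simp [Matrix.mul_apply, Matrix.transpose_apply, Finset.sum_mul]
  simp_rw [h2, hQ, Matrix.one_apply]
  simp [sq]

lemma colDist_rigid {ci cj : ℕ} {Q : Matrix (Fin 3) (Fin 3) ℝ} {t : Fin 3 → ℝ}
    (hQ : Qᵀ * Q = 1) (X : Matrix (Fin 3) (Fin ci) ℝ) (Y : Matrix (Fin 3) (Fin cj) ℝ)
    (p : Fin ci) (q : Fin cj) :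
    colDist (rigid Q t X) (rigid Q t Y) p q = colDist X Y p q := by
  unfold colDist
  congr 1
  have h : ∀ r : Fin 3, rigid Q t X r p - rigid Q t Y r q
      = ∑ s : Fin 3, Q r s * (X s p - Y s q) := by
    intro r
    simp only [rigid, Matrix.of_apply]
    rw [Finset.sum_congr rfl fun s _ => mul_sub (Q r s) (X s p) (Y s q),
      Finset.sum_sub_distrib]
    ring
  simp_rw [h]
  exact orth_sum_sq hQ _

lemma TR_rigid {ci cj : ℕ} {Q : Matrix (Fin 3) (Fin 3) ℝ} {t : Fin 3 → ℝ}
    (hQ : Qᵀ * Q = 1) (Ai : Matrix (Fin ci) (Fin d) ℝ) (Aj : Matrix (Fin cj) (Fin d) ℝ)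
    (wi : Fin ci → ℝ) (wj : Fin cj → ℝ)
    (X : Matrix (Fin 3) (Fin ci) ℝ) (Y : Matrix (Fin 3) (Fin cj) ℝ) :
    TR Ai Aj wi wj (rigid Q t X) (rigid Q t Y) = TR Ai Aj wi wj X Y := by
  unfold TR
  congr 2
  ext p q
  simp only [Matrix.of_apply]
  rw [colDist_rigid hQ]

lemma msgOf_rigid {c : V → ℕ} {Q : Matrix (Fin 3) (Fin 3) ℝ} {t : Fin 3 → ℝ}
    (hQ : Qᵀ * Q = 1) (G : GraphParams V d m' C c) (F : LayerFuns d dh m' C)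
    (h : V → Fin dh → ℝ) (X : (i : V) → Matrix (Fin 3) (Fin (c i)) ℝ) (i j : V) :
    msgOf G F h (fun i => rigid Q t (X i)) i j = msgOf G F h X i j := by
  have hTR : TR (G.A i) (G.A j) (G.w i) (G.w j) (rigid Q t (X i)) (rigid Q t (X j))
      = TR (G.A i) (G.A j) (G.w i) (G.w j) (X i) (X j) := TR_rigid hQ _ _ _ _ _ _
  simp only [msgOf, hTR]

lemma hOut_rigid {c : V → ℕ} {Q : Matrix (Fin 3) (Fin 3) ℝ} {t : Fin 3 → ℝ}
    (hQ : Qᵀ * Q = 1) (G : GraphParams V d m' C c) (F : LayerFuns d dh m' C)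
    (h : V → Fin dh → ℝ) (X : (i : V) → Matrix (Fin 3) (Fin (c i)) ℝ) (i : V) :
    hOut G F h (fun i => rigid Q t (X i)) i = hOut G F h X i := by
  have hs : ∑ j ∈ G.N i, msgOf G F h (fun i => rigid Q t (X i)) i j
      = ∑ j ∈ G.N i, msgOf G F h X i j :=
    Finset.sum_congr rfl fun j _ => msgOf_rigid hQ G F h X i j
  simp only [hOut, hs]

lemma TS_mul {c : ℕ} {Q : Matrix (Fin 3) (Fin 3) ℝ} (hc : c ≤ C)
    (M : Matrix (Fin 3) (Fin c) ℝ) (s : Fin C → ℝ) :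
    TS hc (Q * M) s = Q * TS hc M s := by
  ext r p
  simp [TS, Matrix.mul_apply, Finset.sum_mul, mul_assoc]

lemma xMsgOf_rigid {c : V → ℕ} {Q : Matrix (Fin 3) (Fin 3) ℝ} {t : Fin 3 → ℝ}
    (hpos : ∀ i, 0 < c i) (hQ : Qᵀ * Q = 1)
    (G : GraphParams V d m' C c) (F : LayerFuns d dh m' C)
    (h : V → Fin dh → ℝ) (X : (i : V) → Matrix (Fin 3) (Fin (c i)) ℝ) (i j : V) :
    xMsgOf G F h (fun i => rigid Q t (X i)) i j = Q * xMsgOf G F h X i j := by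
  have hcj : ((c j : ℕ) : ℝ) ≠ 0 := Nat.cast_ne_zero.mpr (hpos j).ne'
  have hM : (Matrix.of fun r p => rigid Q t (X i) r p
        - (∑ q : Fin (c j), rigid Q t (X j) r q) / ((c j : ℕ) : ℝ))
      = Q * Matrix.of fun (r : Fin 3) (p : Fin (c i)) =>
          X i r p - (∑ q : Fin (c j), X j r q) / ((c j : ℕ) : ℝ) := by
    ext r p
    simp only [Matrix.of_apply, rigid, Matrix.mul_apply]
    have h1 : ∑ q : Fin (c j), ((∑ s : Fin 3, Q r s * X j s q) + t r)
        = (∑ s : Fin 3, Q r s * ∑ q : Fin (c j), X j s q) + ((c j : ℕ) : ℝ) * t r := by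
      rw [Finset.sum_add_distrib, Finset.sum_const, nsmul_eq_mul, Finset.sum_comm]
      congr 1
      · exact Finset.sum_congr rfl fun s _ => (Finset.mul_sum _ _ _).symm
      · simp
    rw [h1]
    have h2 : ∑ s : Fin 3, Q r s * (X i s p - (∑ q : Fin (c j), X j s q) / ((c j : ℕ) : ℝ))
        = ∑ s : Fin 3, Q r s * X i s p
          - (∑ s : Fin 3, Q r s * ∑ q : Fin (c j), X j s q) / ((c j : ℕ) : ℝ) := by
      simp only [mul_sub, Finset.sum_sub_distrib, ← mul_div_assoc]
      rw [← Finset.sum_div]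
    rw [h2]
    field_simp
    ring
  simp only [xMsgOf, msgOf_rigid hQ, hM, TS_mul]

lemma xOut_rigid {c : V → ℕ} {Q : Matrix (Fin 3) (Fin 3) ℝ} {t : Fin 3 → ℝ}
    (hpos : ∀ i, 0 < c i) (hQ : Qᵀ * Q = 1)
    (G : GraphParams V d m' C c) (F : LayerFuns d dh m' C)
    (h : V → Fin dh → ℝ) (X : (i : V) → Matrix (Fin 3) (Fin (c i)) ℝ) (i : V) :
    xOut G F h (fun i => rigid Q t (X i)) i = rigid Q t (xOut G F h X i) := by
  unfold xOut
  have hsum : ∑ j ∈ G.N i, xMsgOf G F h (fun i => rigid Q t (X i)) i j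
      = Q * ∑ j ∈ G.N i, xMsgOf G F h X i j := by
    rw [Matrix.mul_sum]
    exact Finset.sum_congr rfl fun j _ => xMsgOf_rigid hpos hQ G F h X i j
  rw [hsum]
  ext r p
  simp only [rigid, Matrix.of_apply, Matrix.add_apply, Matrix.smul_apply, Matrix.mul_apply,
    smul_eq_mul, mul_add, Finset.sum_add_distrib, Finset.mul_sum]
  rw [add_right_comm]
  congr 2
  exact Finset.sum_congr rfl fun s _ => by ring

lemma encStep_rigid {cE : VE → ℕ} {cA : VA → ℕ}
    (hposE : ∀ i, 0 < cE i) (hposA : ∀ j, 0 < cA j)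
    (GE : GraphParams VE d m' C cE) (GA : GraphParams VA d m' C cA)
    (eS : ιS → VE) (eP : ιS → VA)
    (FE FA : ℕ → LayerFuns d dh m' C) (l : ℕ)
    {Q₁ Q₂ : Matrix (Fin 3) (Fin 3) ℝ} (hQ₁ : Q₁ᵀ * Q₁ = 1) (hQ₂ : Q₂ᵀ * Q₂ = 1)
    (t₁ t₂ : Fin 3 → ℝ) (st : EncState VE VA dh cE cA) :
    encStep GE GA eS eP FE FA l
        ⟨st.hE, st.hA, fun i => rigid Q₁ t₁ (st.XE i), fun j => rigid Q₂ t₂ (st.XA j)⟩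
      = ⟨(encStep GE GA eS eP FE FA l st).hE, (encStep GE GA eS eP FE FA l st).hA,
          fun i => rigid Q₁ t₁ ((encStep GE GA eS eP FE FA l st).XE i),
          fun j => rigid Q₂ t₂ ((encStep GE GA eS eP FE FA l st).XA j)⟩ := by
  unfold encStep
  dsimp only
  have hA1e : (fun j => hOut GA (FA l) st.hA (fun j' => rigid Q₂ t₂ (st.XA j')) j)
      = fun j => hOut GA (FA l) st.hA st.XA j :=
    funext fun j => hOut_rigid hQ₂ GA (FA l) st.hA st.XA j
  rw [hA1e]
  have hE2e : (fun i => hOut GE (FE l)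
        (copyToShadow eS eP st.hE fun j => hOut GA (FA l) st.hA st.XA j)
        (fun i' => rigid Q₁ t₁ (st.XE i')) i)
      = fun i => hOut GE (FE l)
        (copyToShadow eS eP st.hE fun j => hOut GA (FA l) st.hA st.XA j) st.XE i :=
    funext fun i => hOut_rigid hQ₁ GE (FE l) _ st.XE i
  rw [hE2e]
  refine EncState.mk.injEq _ _ _ _ _ _ _ _ ▸ ?_
  refine ⟨rfl, rfl, ?_, ?_⟩
  · exact funext fun i => xOut_rigid hposE hQ₁ GE (FE l) _ st.XE i
  · exact funext fun j => xOut_rigid hposA hQ₂ GA (FA l) st.hA st.XA j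

lemma encoder_rigid {cE : VE → ℕ} {cA : VA → ℕ}
    (hposE : ∀ i, 0 < cE i) (hposA : ∀ j, 0 < cA j)
    (GE : GraphParams VE d m' C cE) (GA : GraphParams VA d m' C cA)
    (eS : ιS → VE) (eP : ιS → VA)
    (FE FA : ℕ → LayerFuns d dh m' C)
    {Q₁ Q₂ : Matrix (Fin 3) (Fin 3) ℝ} (hQ₁ : Q₁ᵀ * Q₁ = 1) (hQ₂ : Q₂ᵀ * Q₂ = 1)
    (t₁ t₂ : Fin 3 → ℝ) (L : ℕ) :
    ∀ st : EncState VE VA dh cE cA,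
    encoder GE GA eS eP FE FA L
        ⟨st.hE, st.hA, fun i => rigid Q₁ t₁ (st.XE i), fun j => rigid Q₂ t₂ (st.XA j)⟩
      = ⟨(encoder GE GA eS eP FE FA L st).hE, (encoder GE GA eS eP FE FA L st).hA,
          fun i => rigid Q₁ t₁ ((encoder GE GA eS eP FE FA L st).XE i),
          fun j => rigid Q₂ t₂ ((encoder GE GA eS eP FE FA L st).XA j)⟩ := by
  induction L with
  | zero => intro st; rfl
  | succ L ih =>
    intro st
    show encoder GE GA eS eP FE FA L (encStep GE GA eS eP FE FA L _) = _
    rw [encStep_rigid hposE hposA GE GA eS eP FE FA L hQ₁ hQ₂ t₁ t₂ st]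
    exact ih (encStep GE GA eS eP FE FA L st)

lemma rigid_rigid {c : ℕ} (A B : Matrix (Fin 3) (Fin 3) ℝ) (a b : Fin 3 → ℝ)
    (X : Matrix (Fin 3) (Fin c) ℝ) :
    rigid A a (rigid B b X) = rigid (A * B) (A.mulVec b + a) X := by
  ext r p
  simp only [rigid, Matrix.of_apply, Matrix.mul_apply, Matrix.mulVec, dotProduct,
    Pi.add_apply, mul_add, Finset.sum_add_distrib, Finset.mul_sum, Finset.sum_mul]
  rw [Finset.sum_comm]
  simp_rw [mul_assoc]
  ring

lemma rigid_apply {c : ℕ} (Q : Matrix (Fin 3) (Fin 3) ℝ) (t : Fin 3 → ℝ)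
    (X : Matrix (Fin 3) (Fin c) ℝ) (r : Fin 3) (p : Fin c) :
    rigid Q t X r p = Q.mulVec (fun s => X s p) r + t r := by
  simp [rigid, Matrix.mulVec, dotProduct]

lemma loss_rigid [Fintype ιS] {cE : VE → ℕ} {cA : VA → ℕ}
    (eS : ιS → VE) (eP : ιS → VA) (hmatch : ∀ k, cE (eS k) = cA (eP k))
    (XE : (i : VE) → Matrix (Fin 3) (Fin (cE i)) ℝ)
    (XA : (j : VA) → Matrix (Fin 3) (Fin (cA j)) ℝ)
    {Q₁ Q₂ : Matrix (Fin 3) (Fin 3) ℝ} (hQ₁ : Q₁ᵀ * Q₁ = 1) (hQ₁' : Q₁ * Q₁ᵀ = 1)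
    (t₁ t₂ : Fin 3 → ℝ) (Q' : Matrix (Fin 3) (Fin 3) ℝ) (t' : Fin 3 → ℝ) :
    paratopeAlignLoss eS eP hmatch (fun i => rigid Q₁ t₁ (XE i))
        (fun j => rigid Q₂ t₂ (XA j)) Q' t'
      = paratopeAlignLoss eS eP hmatch XE XA (Q₁ᵀ * Q' * Q₂)
          (Q₁ᵀ.mulVec (Q'.mulVec t₂ + t' - t₁)) := by
  unfold paratopeAlignLoss
  refine Finset.sum_congr rfl fun k _ => ?_
  rw [Finset.sum_comm, Finset.sum_comm (f := fun (r : Fin 3) (p : Fin (cA (eP k))) =>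
    (rigid (Q₁ᵀ * Q' * Q₂) (Q₁ᵀ.mulVec (Q'.mulVec t₂ + t' - t₁)) (XA (eP k)) r p
      - XE (eS k) r (Fin.cast (hmatch k).symm p)) ^ 2)]
  refine Finset.sum_congr rfl fun p _ => ?_
  have key : ∀ r : Fin 3,
      rigid Q' t' (rigid Q₂ t₂ (XA (eP k))) r p
          - rigid Q₁ t₁ (XE (eS k)) r (Fin.cast (hmatch k).symm p)
        = ∑ s : Fin 3, Q₁ r s *
          (rigid (Q₁ᵀ * Q' * Q₂) (Q₁ᵀ.mulVec (Q'.mulVec t₂ + t' - t₁)) (XA (eP k)) s p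
            - XE (eS k) s (Fin.cast (hmatch k).symm p)) := by
    intro r
    have hvec : Q₁.mulVec ((Q₁ᵀ * Q' * Q₂).mulVec (fun s => XA (eP k) s p)
          + Q₁ᵀ.mulVec (Q'.mulVec t₂ + t' - t₁)
          - (fun s => XE (eS k) s (Fin.cast (hmatch k).symm p)))
        = (Q' * Q₂).mulVec (fun s => XA (eP k) s p) + (Q'.mulVec t₂ + t')
          - (Q₁.mulVec (fun s => XE (eS k) s (Fin.cast (hmatch k).symm p)) + t₁) := by
      have e1 : Q₁ * (Q₁ᵀ * Q' * Q₂) = Q' * Q₂ := by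
        rw [← Matrix.mul_assoc, ← Matrix.mul_assoc, hQ₁', Matrix.one_mul]
      rw [Matrix.mulVec_sub, Matrix.mulVec_add, Matrix.mulVec_mulVec, Matrix.mulVec_mulVec,
        e1, hQ₁', Matrix.one_mulVec]
      abel
    have := congrFun hvec r
    rw [rigid_rigid, rigid_apply, rigid_apply]
    calc (Q' * Q₂).mulVec (fun s => XA (eP k) s p) r + (Q'.mulVec t₂ + t') r
            - (Q₁.mulVec (fun s => XE (eS k) s (Fin.cast (hmatch k).symm p)) r + t₁ r)
        = ((Q' * Q₂).mulVec (fun s => XA (eP k) s p) + (Q'.mulVec t₂ + t')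
            - (Q₁.mulVec (fun s => XE (eS k) s (Fin.cast (hmatch k).symm p)) + t₁)) r := by
          simp
      _ = Q₁.mulVec ((Q₁ᵀ * Q' * Q₂).mulVec (fun s => XA (eP k) s p)
            + Q₁ᵀ.mulVec (Q'.mulVec t₂ + t' - t₁)
            - (fun s => XE (eS k) s (Fin.cast (hmatch k).symm p))) r := (congrFun hvec r).symm
      _ = ∑ s : Fin 3, Q₁ r s *
            (rigid (Q₁ᵀ * Q' * Q₂) (Q₁ᵀ.mulVec (Q'.mulVec t₂ + t' - t₁)) (XA (eP k)) s p
              - XE (eS k) s (Fin.cast (hmatch k).symm p)) := by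
          show ∑ s : Fin 3, Q₁ r s * (((Q₁ᵀ * Q' * Q₂).mulVec (fun s => XA (eP k) s p)
              + Q₁ᵀ.mulVec (Q'.mulVec t₂ + t' - t₁)
              - fun s => XE (eS k) s (Fin.cast (hmatch k).symm p)) s) = _
          refine Finset.sum_congr rfl fun s _ => ?_
          congr 1
  simp_rw [key]
  exact orth_sum_sq hQ₁ _

/-- E(3)-equivariance of the single-pass dyMEAN network (encoder, prediction, docking):
transforming the input coordinates of the epitope-with-shadow-paratope graph by `(Q₁, t₁)`
and those of the antibody graph by `(Q₂, t₂)` (a) leaves all predicted amino-acid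
distributions on the native paratope unchanged, and (b) the pair
`(Q₁ Q₀ Q₂ᵀ, Q₁ t₀ + t₁ − Q₁ Q₀ Q₂ᵀ t₂)` is a global minimizer of the transformed
alignment problem, whose docked antibody coordinates equal `Q₁ X̃_j + t₁ 1ᵀ`. -/
theorem dyMEAN_E3_equivariant
    [Fintype VE] [Fintype VA] [Fintype ιS]
    {cE : VE → ℕ} {cA : VA → ℕ} {na : ℕ}
    (hposE : ∀ i, 0 < cE i) (hposA : ∀ j, 0 < cA j)
    (GE : GraphParams VE d m' C cE) (GA : GraphParams VA d m' C cA)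
    (hNE : ∀ i, (GE.N i).Nonempty) (hNA : ∀ j, (GA.N j).Nonempty)
    (eS : ιS → VE) (eP : ιS → VA)
    (hinjS : Function.Injective eS) (hinjP : Function.Injective eP)
    (hmatch : ∀ k, cE (eS k) = cA (eP k))
    (FE FA : ℕ → LayerFuns d dh m' C)
    (φp : (Fin dh → ℝ) → (Fin na → ℝ))
    (L : ℕ) (st : EncState VE VA dh cE cA)
    (Q₀ : Matrix (Fin 3) (Fin 3) ℝ) (t₀ : Fin 3 → ℝ)
    (hmin : IsDockMin eS eP hmatch
      (encoder GE GA eS eP FE FA L st).XE (encoder GE GA eS eP FE FA L st).XA Q₀ t₀)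
    (Q₁ Q₂ : Matrix (Fin 3) (Fin 3) ℝ)
    (hQ₁ : Q₁ᵀ * Q₁ = 1) (hQ₂ : Q₂ᵀ * Q₂ = 1)
    (t₁ t₂ : Fin 3 → ℝ) :
    (∀ k : ιS,
      softmax (φp ((encoder GE GA eS eP FE FA L
          ⟨st.hE, st.hA, fun i => rigid Q₁ t₁ (st.XE i),
            fun j => rigid Q₂ t₂ (st.XA j)⟩).hA (eP k)))
        = softmax (φp ((encoder GE GA eS eP FE FA L st).hA (eP k)))) ∧
    IsDockMin eS eP hmatch
        (encoder GE GA eS eP FE FA L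
          ⟨st.hE, st.hA, fun i => rigid Q₁ t₁ (st.XE i),
            fun j => rigid Q₂ t₂ (st.XA j)⟩).XE
        (encoder GE GA eS eP FE FA L
          ⟨st.hE, st.hA, fun i => rigid Q₁ t₁ (st.XE i),
            fun j => rigid Q₂ t₂ (st.XA j)⟩).XA
        (Q₁ * Q₀ * Q₂ᵀ) (Q₁.mulVec t₀ + t₁ - (Q₁ * Q₀ * Q₂ᵀ).mulVec t₂) ∧
    (∀ j : VA,
      rigid (Q₁ * Q₀ * Q₂ᵀ) (Q₁.mulVec t₀ + t₁ - (Q₁ * Q₀ * Q₂ᵀ).mulVec t₂)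
          ((encoder GE GA eS eP FE FA L
            ⟨st.hE, st.hA, fun i => rigid Q₁ t₁ (st.XE i),
              fun j => rigid Q₂ t₂ (st.XA j)⟩).XA j)
        = rigid Q₁ t₁ (rigid Q₀ t₀ ((encoder GE GA eS eP FE FA L st).XA j))) := by
  have hQ₁' : Q₁ * Q₁ᵀ = 1 := mul_eq_one_comm.mp hQ₁
  have hQ₂' : Q₂ * Q₂ᵀ = 1 := mul_eq_one_comm.mp hQ₂
  obtain ⟨hQ₀, hminle⟩ := hmin
  have henc := encoder_rigid hposE hposA GE GA eS eP FE FA hQ₁ hQ₂ t₁ t₂ L st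
  rw [henc]
  have hQt : (Q₁ * Q₀ * Q₂ᵀ)ᵀ * (Q₁ * Q₀ * Q₂ᵀ) = 1 := by
    simp only [Matrix.transpose_mul, Matrix.transpose_transpose, Matrix.mul_assoc]
    rw [← Matrix.mul_assoc Q₁ᵀ Q₁, hQ₁, Matrix.one_mul,
      ← Matrix.mul_assoc Q₀ᵀ Q₀, hQ₀, Matrix.one_mul, hQ₂']
  refine ⟨fun k => rfl, ⟨hQt, ?_⟩, ?_⟩
  · intro Q' t' hQ'
    show paratopeAlignLoss eS eP hmatch
        (fun i => rigid Q₁ t₁ ((encoder GE GA eS eP FE FA L st).XE i))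
        (fun j => rigid Q₂ t₂ ((encoder GE GA eS eP FE FA L st).XA j)) _ _ ≤ _
    rw [loss_rigid eS eP hmatch _ _ hQ₁ hQ₁' t₁ t₂,
      loss_rigid eS eP hmatch _ _ hQ₁ hQ₁' t₁ t₂]
    have eQ : Q₁ᵀ * (Q₁ * Q₀ * Q₂ᵀ) * Q₂ = Q₀ := by
      rw [Matrix.mul_assoc Q₁ Q₀ Q₂ᵀ, ← Matrix.mul_assoc Q₁ᵀ Q₁, hQ₁, Matrix.one_mul,
        Matrix.mul_assoc, hQ₂, Matrix.mul_one]
    have et : Q₁ᵀ.mulVec ((Q₁ * Q₀ * Q₂ᵀ).mulVec t₂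
          + (Q₁.mulVec t₀ + t₁ - (Q₁ * Q₀ * Q₂ᵀ).mulVec t₂) - t₁) = t₀ := by
      have harg : (Q₁ * Q₀ * Q₂ᵀ).mulVec t₂
          + (Q₁.mulVec t₀ + t₁ - (Q₁ * Q₀ * Q₂ᵀ).mulVec t₂) - t₁ = Q₁.mulVec t₀ := by abel
      rw [harg, Matrix.mulVec_mulVec, hQ₁, Matrix.one_mulVec]
    rw [eQ, et]
    have hQ'' : (Q₁ᵀ * Q' * Q₂)ᵀ * (Q₁ᵀ * Q' * Q₂) = 1 := by
      simp only [Matrix.transpose_mul, Matrix.transpose_transpose, Matrix.mul_assoc]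
      rw [← Matrix.mul_assoc Q₁ Q₁ᵀ, hQ₁', Matrix.one_mul,
        ← Matrix.mul_assoc Q'ᵀ Q', hQ', Matrix.one_mul, hQ₂]
    exact hminle _ _ hQ''
  · intro j
    show rigid (Q₁ * Q₀ * Q₂ᵀ) (Q₁.mulVec t₀ + t₁ - (Q₁ * Q₀ * Q₂ᵀ).mulVec t₂)
        (rigid Q₂ t₂ ((encoder GE GA eS eP FE FA L st).XA j)) = _
    rw [rigid_rigid, rigid_rigid]
    have e1 : Q₁ * Q₀ * Q₂ᵀ * Q₂ = Q₁ * Q₀ := by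
      rw [Matrix.mul_assoc (Q₁ * Q₀), hQ₂, Matrix.mul_one]
    have e2 : (Q₁ * Q₀ * Q₂ᵀ).mulVec t₂
        + (Q₁.mulVec t₀ + t₁ - (Q₁ * Q₀ * Q₂ᵀ).mulVec t₂) = Q₁.mulVec t₀ + t₁ := by abel
    rw [e1, e2]


end
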